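/- Under the transfer formula f^+(n,z) = A^+(n)^{-1}(z^n + ∑_{m=n+1}^{2N^+−n−1} K_0^+(n,m) z^m) for the Jost solution, the first kernel coefficient satisfies K_0^+(n, n+1) = −∑_{m=n+1}^{N^+} b_m. -/

import Mathlib

private lemma poly_deriv0 (c : ℕ → ℂ) (M : ℕ) (hM : 1 ≤ M) :
    deriv (fun z : ℂ => 1 + ∑ j ∈ Finset.Icc 1 M, c j * z ^ j) 0 = c 1 := by
  rw [deriv_const_add, deriv_fun_sum (by intro i _; fun_prop)]
  have : ∀ j ∈ Finset.Icc 1 M, deriv (fun z : ℂ => c j * z ^ j) 0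
      = c j * ((j : ℂ) * (0 : ℂ) ^ (j - 1)) := by
    intro j _
    rw [deriv_const_mul _ (by fun_prop), deriv_pow_field]
  rw [Finset.sum_congr rfl this]
  rw [Finset.sum_eq_single_of_mem 1 (Finset.mem_Icc.mpr ⟨le_refl 1, hM⟩)]
  · norm_num
  · intro j hj hne
    simp only [Finset.mem_Icc] at hj
    rw [zero_pow (by omega), mul_zero, mul_zero]

/-- Writing `g⁺(n,z) = 1 + ∑_{j=1}^{2(N⁺−n)−1} K₀⁺(n,n+j) zʲ` for the (normalized) Jost
solution, the first kernel coefficient satisfies `K₀⁺(n, n+1) = −∑_{m=n+1}^{N⁺} bₘ`. -/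
theorem kernel_first_coefficient (a b : ℤ → ℝ) (Nm Np : ℤ)
    (ha : ∀ n, 0 < a n)
    (hasupp : ∀ n, n < Nm ∨ Np ≤ n → a n = 1)
    (hbsupp : ∀ n, n < Nm ∨ Np < n → b n = 0)
    (g : ℤ → ℂ → ℂ)
    (hg1 : ∀ n : ℤ, ∀ z : ℂ, Np ≤ n → g n z = 1)
    (hgrec : ∀ n : ℤ, ∀ z : ℂ,
      g (n - 1) z = g n z * (1 + z ^ 2 - (b n : ℂ) * z) - (a n : ℂ) ^ 2 * z ^ 2 * g (n + 1) z)
    (K₀ : ℤ → ℤ → ℝ)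
    (hK₀zero : ∀ n m : ℤ, (m ≤ n ∨ 2 * Np ≤ m + n) → K₀ n m = 0)
    (hK : ∀ n : ℤ, ∀ z : ℂ,
      g n z = 1 + ∑ j ∈ Finset.Icc 1 (2 * (Np - n) - 1).toNat,
        (K₀ n (n + (j : ℤ)) : ℂ) * z ^ j) :
    ∀ n : ℤ, K₀ n (n + 1) = -∑ m ∈ Finset.Icc (n + 1) Np, b m := by
  -- value at 0
  have hval : ∀ n : ℤ, g n 0 = 1 := by
    intro n
    rw [hK n 0, Finset.sum_eq_zero, add_zero]
    intro j hj
    simp only [Finset.mem_Icc] at hj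
    rw [zero_pow (by omega), mul_zero]
  -- differentiability
  have hgdiff : ∀ n : ℤ, Differentiable ℂ (g n) := by
    intro n
    rw [funext (hK n)]
    fun_prop
  -- derivative at 0
  have hderiv : ∀ n : ℤ, deriv (g n) 0 = (K₀ n (n + 1) : ℂ) := by
    intro n
    have hgfun : g n = fun z : ℂ => 1 + ∑ j ∈ Finset.Icc 1 (2 * (Np - n) - 1).toNat,
        (K₀ n (n + (j : ℤ)) : ℂ) * z ^ j := funext (hK n)
    by_cases hn : Np ≤ n
    · have hM : (2 * (Np - n) - 1).toNat = 0 := by omega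
      rw [hgfun, hM, hK₀zero n (n + 1) (Or.inr (by omega))]
      simp
    · have hM : 1 ≤ (2 * (Np - n) - 1).toNat := by omega
      rw [hgfun, poly_deriv0 _ _ hM]
      norm_num
  -- the key recursion for the first coefficient
  have key : ∀ n : ℤ, K₀ n (n + 1) = K₀ (n + 1) (n + 2) - b (n + 1) := by
    intro n
    have hrec : g n = fun z : ℂ =>
        g (n + 1) z * (1 + z ^ 2 - (b (n + 1) : ℂ) * z)
          - (a (n + 1) : ℂ) ^ 2 * z ^ 2 * g (n + 2) z := by
      funext z
      have h := hgrec (n + 1) z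
      rw [show n + 1 - 1 = n by ring, show n + 1 + 1 = n + 2 by ring] at h
      exact h
    have dG : deriv (fun z : ℂ => 1 + z ^ 2 - (b (n + 1) : ℂ) * z) 0 = -(b (n + 1) : ℂ) := by
      rw [deriv_fun_sub (by fun_prop) (by fun_prop), deriv_const_add, deriv_pow_field,
        deriv_const_mul _ (by fun_prop), deriv_id'']
      norm_num
    have dH : deriv (fun z : ℂ => (a (n + 1) : ℂ) ^ 2 * z ^ 2 * g (n + 2) z) 0 = 0 := by
      rw [deriv_fun_mul (by fun_prop) ((hgdiff (n + 2)) 0), deriv_const_mul _ (by fun_prop),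
        deriv_pow_field]
      norm_num
    have hC : (K₀ n (n + 1) : ℂ) = (K₀ (n + 1) (n + 2) : ℂ) - (b (n + 1) : ℂ) := by
      calc (K₀ n (n + 1) : ℂ) = deriv (g n) 0 := (hderiv n).symm
        _ = deriv (fun z : ℂ =>
            g (n + 1) z * (1 + z ^ 2 - (b (n + 1) : ℂ) * z)
              - (a (n + 1) : ℂ) ^ 2 * z ^ 2 * g (n + 2) z) 0 := by rw [hrec]
        _ = deriv (fun z : ℂ => g (n + 1) z * (1 + z ^ 2 - (b (n + 1) : ℂ) * z)) 0
            - deriv (fun z : ℂ => (a (n + 1) : ℂ) ^ 2 * z ^ 2 * g (n + 2) z) 0 := by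
            apply deriv_sub
            · exact (((hgdiff (n + 1)) 0).mul (by fun_prop))
            · fun_prop
        _ = (K₀ (n + 1) (n + 2) : ℂ) - (b (n + 1) : ℂ) := by
            rw [deriv_fun_mul ((hgdiff (n + 1)) 0) (by fun_prop), dG, dH, hval (n + 1),
              hderiv (n + 1)]
            push_cast
            ring_nf
    exact_mod_cast hC
  -- main claim by downward induction
  intro n
  by_cases hn : n ≤ Np
  · refine Int.le_induction_down (motive := fun k _ => K₀ k (k + 1) = -∑ m ∈ Finset.Icc (k + 1) Np, b m) ?_ ?_ n hn
    · show K₀ Np (Np + 1) = _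
      rw [hK₀zero Np (Np + 1) (Or.inr (by omega)), Finset.Icc_eq_empty (by omega)]
      simp
    · intro m hm ih
      have h := key (m - 1)
      rw [show m - 1 + 1 = m by ring, show m - 1 + 2 = m + 1 by ring] at h
      rw [show m - 1 + 1 = m by ring]
      rw [h, ih]
      have hins : Finset.Icc m Np = insert m (Finset.Icc (m + 1) Np) := by
        ext x
        simp only [Finset.mem_Icc, Finset.mem_insert]
        omega
      rw [hins, Finset.sum_insert (by simp)]
      ring
  · rw [hK₀zero n (n + 1) (Or.inr (by omega)), Finset.Icc_eq_empty (by omega)]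
    simp
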